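/- Let n, k ≤ n, D, t be positive integers and let M be a mask over ground set [n] such that every vertex in V(M) has mask degree at most 2t. Then there exists a mask M' over [n] such that LDUB(n, M) ≤ LDUB(n, M') and |V(M')| ≤ 2t + 2 + 2|M|/t. -/

import Mathlib

open Finset Filter Asymptotics Real MeasureTheory
open scoped Classical BigOperators

noncomputable section

namespace PlantedCliqueLD

/-- The vertex set `V(M)` of a mask `M` over ground set `[n]`. -/
def maskVerts {n : ℕ} (M : Finset (Sym2 (Fin n))) : Finset (Fin n) :=
  Finset.univ.filter fun v => ∃ e ∈ M, v ∈ e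

/-- The mask degree `deg^M(v)` of a vertex `v`. -/
def maskDeg {n : ℕ} (M : Finset (Sym2 (Fin n))) (v : Fin n) : ℕ :=
  (M.filter fun e => v ∈ e).card

/-- Expectation of `f` under `Clique(n,k)`, the uniform distribution on
subsets of `[n]` of size `k` (identifying a 0/1 vector with its support). -/
def cliqueExp (n k : ℕ) (f : Finset (Fin n) → ℝ) : ℝ :=
  (∑ S ∈ Finset.powersetCard k (Finset.univ : Finset (Fin n)), f S) /
    ((Finset.powersetCard k (Finset.univ : Finset (Fin n))).card : ℝ)

/-- Expectation of `f` under `Clique(n,k,S)`: uniform over size-`k` subsets of `S`. -/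
def cliqueExpCond (n k : ℕ) (S : Finset (Fin n)) (f : Finset (Fin n) → ℝ) : ℝ :=
  (∑ T ∈ Finset.powersetCard k S, f T) / ((Finset.powersetCard k S).card : ℝ)

/-- Both endpoints of the unordered pair `e` lie in `T`. -/
def edgeIn {n : ℕ} (T : Finset (Fin n)) (e : Sym2 (Fin n)) : Prop :=
  ∀ v ∈ e, v ∈ T

/-- `Φ(M) = ∑_{(i,j) ∈ M} Z_i Z_j` where `Z_i` is the indicator of `i ∈ T`. -/
def Phi {n : ℕ} (M : Finset (Sym2 (Fin n))) (T : Finset (Fin n)) : ℝ :=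
  ∑ e ∈ M, if edgeIn T e then (1 : ℝ) else 0

/-- The low-degree likelihood ratio upper bound `LDUB(n,M)` at degree `D`
and clique size `k`:  `1 + ∑_{d=1}^D (1/d!) E[(∑_{(i,j)∈M} Z_i Z_j)^d]`,
where `Z_i = X_i X'_i` for independent `X, X' ~ Clique(n,k)`. -/
def LDUB (n k D : ℕ) (M : Finset (Sym2 (Fin n))) : ℝ :=
  1 + ∑ d ∈ Finset.Icc 1 D, (1 / (Nat.factorial d : ℝ)) *
    cliqueExp n k fun S => cliqueExp n k fun S' => Phi M (S ∩ S') ^ d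

/-- The conditional low-degree likelihood ratio upper bound `Cond(n,M,S)`,
defined as `LDUB` but with `X, X' ~ Clique(n,k,S)`. -/
def CondLDUB (n k D : ℕ) (M : Finset (Sym2 (Fin n))) (S : Finset (Fin n)) : ℝ :=
  1 + ∑ d ∈ Finset.Icc 1 D, (1 / (Nat.factorial d : ℝ)) *
    cliqueExpCond n k S fun X => cliqueExpCond n k S fun X' => Phi M (X ∩ X') ^ d

/-- The set of vertices that donate an edge in `Donate(M, v → u)`:
those `s ∉ {v,u}` with `(s,v) ∈ M` and `(s,u) ∉ M`. -/
def donorSet {n : ℕ} (M : Finset (Sym2 (Fin n))) (v u : Fin n) : Finset (Fin n) :=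
  Finset.univ.filter fun s => s ≠ v ∧ s ≠ u ∧ s(s, v) ∈ M ∧ s(s, u) ∉ M

/-- `Donate(M, v → u)`: for every `s ∈ V(M) \ {v,u}` with `(s,v) ∈ M` and
`(s,u) ∉ M`, remove `(s,v)` and add `(s,u)`. -/
def donate {n : ℕ} (M : Finset (Sym2 (Fin n))) (v u : Fin n) : Finset (Sym2 (Fin n)) :=
  (M \ (donorSet M v u).image fun s => s(s, v)) ∪ (donorSet M v u).image fun s => s(s, u)

/-- The `±1` value encoded by a Boolean. -/
def signVal (b : Bool) : ℝ := if b then 1 else -1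

/-- Expectation of `h` under the (masked) Erdős–Rényi null distribution:
all coordinates independent uniform `±1`.  (Since `h` is only ever applied
through coordinates of the mask, this realizes the marginal `G(n,M)`.) -/
def nullExp (n : ℕ) (h : (Sym2 (Fin n) → ℝ) → ℝ) : ℝ :=
  (∑ A : Sym2 (Fin n) → Bool, h fun e => signVal (A e)) /
    (Fintype.card (Sym2 (Fin n) → Bool) : ℝ)

/-- The planted sample: edges inside the clique `S` are `+1`; all other
coordinates take the independent uniform `±1` values given by `A`. -/
def plantedSample {n : ℕ} (S : Finset (Fin n)) (A : Sym2 (Fin n) → Bool) :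
    Sym2 (Fin n) → ℝ := fun e => if edgeIn S e then 1 else signVal (A e)

/-- Joint expectation of `h(K, Y)` where `K ~ Clique(n,k)` is the planted
clique and `Y` is the planted-clique sample (this realizes `G(n,k,M)` for
functions reading only mask coordinates, jointly with the clique). -/
def plantedJointExp (n k : ℕ) (h : Finset (Fin n) → (Sym2 (Fin n) → ℝ) → ℝ) : ℝ :=
  cliqueExp n k fun S =>
    (∑ A : Sym2 (Fin n) → Bool, h S (plantedSample S A)) /
      (Fintype.card (Sym2 (Fin n) → Bool) : ℝ)

/-- Expectation of `h(Y)` under the planted clique distribution. -/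
def plantedExp (n k : ℕ) (h : (Sym2 (Fin n) → ℝ) → ℝ) : ℝ :=
  plantedJointExp n k fun _ Y => h Y

/-- Variance under the null distribution. -/
def nullVar (n : ℕ) (h : (Sym2 (Fin n) → ℝ) → ℝ) : ℝ :=
  nullExp n fun Y => (h Y - nullExp n h) ^ 2

/-- Variance under the planted distribution. -/
def plantedVar (n k : ℕ) (h : (Sym2 (Fin n) → ℝ) → ℝ) : ℝ :=
  plantedExp n k fun Y => (h Y - plantedExp n k h) ^ 2

/-- Evaluate a polynomial whose variables are the entries of the mask `M`
on a (full) sample `Y`, reading only the coordinates in `M`. -/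
def evalMasked {n : ℕ} (M : Finset (Sym2 (Fin n)))
    (f : MvPolynomial {e : Sym2 (Fin n) // e ∈ M} ℝ) (Y : Sym2 (Fin n) → ℝ) : ℝ :=
  MvPolynomial.eval (fun e => Y e.1) f

/-! ### Auxiliary lemmas for Statement 6 -/

section Aux

variable {n : ℕ}

private lemma pow_sub_pow_le {y x δ : ℝ} (hy : 0 ≤ y) (hxy : y ≤ x) (hδ : 0 ≤ δ) (d : ℕ) :
    x ^ d + (y + δ) ^ d ≤ (x + δ) ^ d + y ^ d := by
  have h1 := geom_sum₂_mul (y + δ) y d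
  have h2 := geom_sum₂_mul (x + δ) x d
  have hsum : (∑ i ∈ Finset.range d, (y + δ) ^ i * y ^ (d - 1 - i)) ≤
      ∑ i ∈ Finset.range d, (x + δ) ^ i * x ^ (d - 1 - i) := by
    apply Finset.sum_le_sum
    intro i _
    exact mul_le_mul (pow_le_pow_left₀ (by linarith) (by linarith) i)
      (pow_le_pow_left₀ hy hxy _) (pow_nonneg hy _) (pow_nonneg (by linarith) _)
  have hmul := mul_le_mul_of_nonneg_right hsum hδ
  have e1 : (y + δ) - y = δ := by ring
  have e2 : (x + δ) - x = δ := by ring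
  rw [e1] at h1
  rw [e2] at h2
  linarith

private lemma edgeIn_mk {T : Finset (Fin n)} {a b : Fin n} :
    edgeIn T s(a, b) ↔ a ∈ T ∧ b ∈ T := by
  constructor
  · intro h; exact ⟨h a (Sym2.mem_mk_left a b), h b (Sym2.mem_mk_right a b)⟩
  · rintro ⟨ha, hb⟩ w hw
    rcases Sym2.mem_iff.1 hw with rfl | rfl <;> assumption

private lemma mem_donorSet_iff {M : Finset (Sym2 (Fin n))} {v u s : Fin n} :
    s ∈ donorSet M v u ↔ s ≠ v ∧ s ≠ u ∧ s(s, v) ∈ M ∧ s(s, u) ∉ M := by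
  simp [donorSet]

private lemma Phi_eq_card (M : Finset (Sym2 (Fin n))) (T : Finset (Fin n)) :
    Phi M T = ((M.filter fun e => edgeIn T e).card : ℝ) := by
  simp [Phi, Finset.sum_boole]

/-- edge-count of a mask inside a vertex set. -/
private def cnt (M : Finset (Sym2 (Fin n))) (T : Finset (Fin n)) : ℕ :=
  (M.filter fun e => edgeIn T e).card

private lemma Phi_eq_cnt (M : Finset (Sym2 (Fin n))) (T : Finset (Fin n)) :
    Phi M T = (cnt M T : ℝ) := Phi_eq_card M T

private lemma cnt_union {A B : Finset (Sym2 (Fin n))} (h : Disjoint A B) (T : Finset (Fin n)) :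
    cnt (A ∪ B) T = cnt A T + cnt B T := by
  unfold cnt
  rw [Finset.filter_union, Finset.card_union_of_disjoint (Finset.disjoint_filter_filter h)]

private lemma cnt_sdiff_add {X M : Finset (Sym2 (Fin n))} (h : X ⊆ M) (T : Finset (Fin n)) :
    cnt (M \ X) T + cnt X T = cnt M T := by
  rw [← cnt_union sdiff_disjoint T, Finset.sdiff_union_of_subset h]

private lemma cnt_image {A : Finset (Fin n)} {w : Fin n} (hA : ∀ s ∈ A, s ≠ w)
    (T : Finset (Fin n)) :
    cnt (A.image fun s => s(s, w)) T
      = if w ∈ T then (A.filter (· ∈ T)).card else 0 := by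
  unfold cnt
  rw [Finset.filter_image, Finset.card_image_of_injOn]
  · split_ifs with hw
    · congr 1
      apply Finset.filter_congr
      intro s hs
      simp [edgeIn_mk, hw]
    · rw [Finset.card_eq_zero]
      apply Finset.filter_false_of_mem
      intro s hs h
      exact hw (edgeIn_mk.1 h).2
  · intro s hs s' hs' hss
    simp only [Finset.coe_filter, Set.mem_setOf_eq] at hs hs'
    rcases Sym2.eq_iff.1 hss with ⟨h1, _⟩ | ⟨h1, h2⟩
    · exact h1
    · exact absurd h1 (hA s hs.1)

private lemma mem_image_swap {T : Finset (Fin n)} {u v a : Fin n} :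
    a ∈ T.image (Equiv.swap u v) ↔ Equiv.swap u v a ∈ T := by
  rw [Finset.mem_image]
  constructor
  · rintro ⟨b, hb, rfl⟩; rwa [Equiv.swap_apply_self]
  · intro h; exact ⟨_, h, Equiv.swap_apply_self _ _ _⟩

private lemma image_swap_image_swap {u v : Fin n} (T : Finset (Fin n)) :
    (T.image (Equiv.swap u v)).image (Equiv.swap u v) = T := by
  rw [Finset.image_image]
  have : (Equiv.swap u v) ∘ (Equiv.swap u v) = id := by
    funext x; simp [Equiv.swap_apply_self]
  rw [this, Finset.image_id]

private lemma image_swap_eq_self {u v : Fin n} {T : Finset (Fin n)}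
    (h : u ∈ T ↔ v ∈ T) : T.image (Equiv.swap u v) = T := by
  ext a
  rw [mem_image_swap]
  by_cases hau : a = u
  · subst hau; rw [Equiv.swap_apply_left]; exact h.symm
  by_cases hav : a = v
  · subst hav; rw [Equiv.swap_apply_right]; exact h
  · rw [Equiv.swap_apply_of_ne_of_ne hau hav]

/-- The basic decomposition of counts for `donate`. -/
private lemma cnt_donate (M : Finset (Sym2 (Fin n))) (v u : Fin n) (T : Finset (Fin n)) :
    cnt (donate M v u) T
      = cnt (M \ (donorSet M v u).image fun s => s(s, v)) T
        + cnt ((donorSet M v u).image fun s => s(s, u)) T := by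
  apply cnt_union
  rw [Finset.disjoint_left]
  intro e he hY
  rw [Finset.mem_sdiff] at he
  obtain ⟨s, hs, rfl⟩ := Finset.mem_image.1 hY
  exact (mem_donorSet_iff.1 hs).2.2.2 he.1

private lemma donorSet_ne_v {M : Finset (Sym2 (Fin n))} {v u : Fin n} :
    ∀ s ∈ donorSet M v u, s ≠ v := fun s hs => (mem_donorSet_iff.1 hs).1

private lemma donorSet_ne_u {M : Finset (Sym2 (Fin n))} {v u : Fin n} :
    ∀ s ∈ donorSet M v u, s ≠ u := fun s hs => (mem_donorSet_iff.1 hs).2.1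

private lemma X_subset_M {M : Finset (Sym2 (Fin n))} {v u : Fin n} :
    ((donorSet M v u).image fun s => s(s, v)) ⊆ M := by
  intro e he
  obtain ⟨s, hs, rfl⟩ := Finset.mem_image.1 he
  exact (mem_donorSet_iff.1 hs).2.2.1

private lemma cnt_M_split (M : Finset (Sym2 (Fin n))) (v u : Fin n) (T : Finset (Fin n)) :
    cnt M T = cnt (M \ (donorSet M v u).image fun s => s(s, v)) T
        + cnt ((donorSet M v u).image fun s => s(s, v)) T :=
  (cnt_sdiff_add X_subset_M T).symm

/-- The key injection: edges of `M` minus donor edges inside the swapped set inject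
into edges of `M` inside `T`, when `u ∈ T`, `v ∉ T`. -/
private lemma cnt_sdiff_swap_le {M : Finset (Sym2 (Fin n))} {v u : Fin n}
    (hMnd : ∀ e ∈ M, ¬ e.IsDiag) (huv : u ≠ v) {T : Finset (Fin n)}
    (hu : u ∈ T) (hv : v ∉ T) :
    cnt (M \ (donorSet M v u).image fun s => s(s, v)) (T.image (Equiv.swap u v))
      ≤ cnt M T := by
  classical
  set σT := T.image (Equiv.swap u v) with hσT
  have huσ : u ∉ σT := by
    rw [hσT, mem_image_swap, Equiv.swap_apply_left]; exact hv
  have hvσ : v ∈ σT := by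
    rw [hσT, mem_image_swap, Equiv.swap_apply_right]; exact hu
  have hmemσ : ∀ a : Fin n, a ≠ u → a ≠ v → (a ∈ σT ↔ a ∈ T) := by
    intro a hau hav
    rw [hσT, mem_image_swap, Equiv.swap_apply_of_ne_of_ne hau hav]
  set rn : Fin n → Fin n := fun w => if w = v then u else w with hrn
  set rn' : Fin n → Fin n := fun w => if w = u then v else w with hrn'
  have hinv : ∀ e ∈ ((M \ (donorSet M v u).image fun s => s(s, v)).filter
      fun e => edgeIn (σT) e), Sym2.map rn' (Sym2.map rn e) = e := by
    intro e he
    rw [Finset.mem_filter] at he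
    induction e using Sym2.ind with
    | _ a b =>
      obtain ⟨ha, hb⟩ := edgeIn_mk.1 he.2
      have hau : a ≠ u := fun h => huσ (h ▸ ha)
      have hbu : b ≠ u := fun h => huσ (h ▸ hb)
      rw [Sym2.map_map, Sym2.map_pair_eq]
      have hcomp : ∀ w : Fin n, w ≠ u → rn' (rn w) = w := by
        intro w hw
        by_cases hwv : w = v
        · subst hwv; simp [hrn, hrn']
        · simp [hrn, hrn', hwv, hw]
      rw [Function.comp_apply, Function.comp_apply, hcomp a hau, hcomp b hbu]
  apply Finset.card_le_card_of_injOn (Sym2.map rn)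
  · intro e he
    rw [Finset.mem_coe, Finset.mem_filter, Finset.mem_sdiff] at he
    obtain ⟨⟨heM, heX⟩, heT⟩ := he
    induction e using Sym2.ind with
    | _ a b =>
      obtain ⟨ha, hb⟩ := edgeIn_mk.1 heT
      have hau : a ≠ u := fun h => huσ (h ▸ ha)
      have hbu : b ≠ u := fun h => huσ (h ▸ hb)
      have hab : a ≠ b := by
        have := hMnd _ heM; rwa [Sym2.mk_isDiag_iff] at this
      rw [Finset.mem_coe, Finset.mem_filter, Sym2.map_pair_eq]
      by_cases hav : a = v
      · have hbv : b ≠ v := fun h => hab (hav.trans h.symm)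
        have hbT : b ∈ T := (hmemσ b hbu hbv).1 hb
        have habv : s(b, v) = s(a, b) := by rw [Sym2.eq_swap, hav]
        have hbM : s(b, u) ∈ M := by
          by_contra hbUM
          apply heX
          apply Finset.mem_image.2
          exact ⟨b, mem_donorSet_iff.2 ⟨hbv, hbu, habv ▸ heM, hbUM⟩, habv⟩
        have h1 : rn a = u := by simp [hrn, hav]
        have h2 : rn b = b := by simp [hrn, hbv]
        rw [h1, h2]
        exact ⟨by rwa [Sym2.eq_swap], edgeIn_mk.2 ⟨hu, hbT⟩⟩
      · by_cases hbv : b = v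
        · have haT : a ∈ T := (hmemσ a hau hav).1 ha
          have habv : s(a, v) = s(a, b) := by rw [hbv]
          have haM : s(a, u) ∈ M := by
            by_contra haUM
            apply heX
            apply Finset.mem_image.2
            exact ⟨a, mem_donorSet_iff.2 ⟨hav, hau, habv ▸ heM, haUM⟩, habv⟩
          have h1 : rn b = u := by simp [hrn, hbv]
          have h2 : rn a = a := by simp [hrn, hav]
          rw [h1, h2]
          exact ⟨haM, edgeIn_mk.2 ⟨haT, hu⟩⟩
        · have haT : a ∈ T := (hmemσ a hau hav).1 ha
          have hbT : b ∈ T := (hmemσ b hbu hbv).1 hb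
          have h1 : rn a = a := by simp [hrn, hav]
          have h2 : rn b = b := by simp [hrn, hbv]
          rw [h1, h2]
          exact ⟨heM, edgeIn_mk.2 ⟨haT, hbT⟩⟩
  · intro e he e' he' heq
    have h1 := hinv e he
    have h2 := hinv e' he'
    rw [← h1, ← h2, heq]

private lemma donor_filter_swap {M : Finset (Sym2 (Fin n))} {v u : Fin n}
    (T : Finset (Fin n)) :
    ((donorSet M v u).filter (· ∈ T.image (Equiv.swap u v))).card
      = ((donorSet M v u).filter (· ∈ T)).card := by
  congr 1
  apply Finset.filter_congr
  intro s hs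
  rw [mem_image_swap,
    Equiv.swap_apply_of_ne_of_ne (donorSet_ne_u s hs) (donorSet_ne_v s hs)]

/-- `u ∈ T`, `v ∉ T`: donation adds `δ` edges inside `T`. -/
private lemma cnt_donate_main (M : Finset (Sym2 (Fin n))) {v u : Fin n}
    {T : Finset (Fin n)} (hu : u ∈ T) (hv : v ∉ T) :
    cnt (donate M v u) T = cnt M T + ((donorSet M v u).filter (· ∈ T)).card := by
  rw [cnt_donate, cnt_M_split M v u T,
    cnt_image donorSet_ne_v T, cnt_image donorSet_ne_u T, if_neg hv, if_pos hu]
  omega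

/-- `u ∈ T`, `v ∉ T`: donation removes `δ` edges inside the swapped set. -/
private lemma cnt_donate_main_swap (M : Finset (Sym2 (Fin n))) {v u : Fin n}
    (huv : u ≠ v) {T : Finset (Fin n)} (hu : u ∈ T) (hv : v ∉ T) :
    cnt M (T.image (Equiv.swap u v))
      = cnt (donate M v u) (T.image (Equiv.swap u v))
        + ((donorSet M v u).filter (· ∈ T)).card := by
  have huσ : u ∉ T.image (Equiv.swap u v) := by
    rw [mem_image_swap, Equiv.swap_apply_left]; exact hv
  have hvσ : v ∈ T.image (Equiv.swap u v) := by
    rw [mem_image_swap, Equiv.swap_apply_right]; exact hu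
  rw [cnt_donate, cnt_M_split M v u (T.image (Equiv.swap u v)),
    cnt_image donorSet_ne_v _, cnt_image donorSet_ne_u _, if_neg huσ, if_pos hvσ,
    donor_filter_swap]
  omega

/-- When `u` and `v` are on the same side of `T`, donation does not change the count. -/
private lemma cnt_donate_same (M : Finset (Sym2 (Fin n))) {v u : Fin n}
    {T : Finset (Fin n)} (h : u ∈ T ↔ v ∈ T) :
    cnt (donate M v u) T = cnt M T := by
  rw [cnt_donate, cnt_M_split M v u T,
    cnt_image donorSet_ne_v T, cnt_image donorSet_ne_u T]
  by_cases hu : u ∈ T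
  · rw [if_pos hu, if_pos (h.1 hu)]
  · rw [if_neg hu, if_neg (fun hv => hu (h.2 hv))]

/-- The pointwise (after swap-symmetrization) inequality in the main case. -/
private lemma core_main {M : Finset (Sym2 (Fin n))} {v u : Fin n}
    (hMnd : ∀ e ∈ M, ¬ e.IsDiag) (huv : u ≠ v) {T : Finset (Fin n)}
    (hu : u ∈ T) (hv : v ∉ T) (d : ℕ) :
    Phi M T ^ d + Phi M (T.image (Equiv.swap u v)) ^ d
      ≤ Phi (donate M v u) T ^ d + Phi (donate M v u) (T.image (Equiv.swap u v)) ^ d := by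
  have f1 := cnt_donate_main M hu hv
  have f2 := cnt_donate_main_swap M huv hu hv
  have f3 := cnt_sdiff_swap_le hMnd huv hu hv
  -- derive y ≤ x
  have f4 : cnt M (T.image (Equiv.swap u v)) ≤ cnt M T
      + ((donorSet M v u).filter (· ∈ T)).card := by
    have := cnt_M_split M v u (T.image (Equiv.swap u v))
    rw [cnt_image donorSet_ne_v _, if_pos (by
      rw [mem_image_swap, Equiv.swap_apply_right]; exact hu), donor_filter_swap] at this
    omega
  have hyx : cnt (donate M v u) (T.image (Equiv.swap u v)) ≤ cnt M T := by omega
  rw [Phi_eq_cnt, Phi_eq_cnt, Phi_eq_cnt, Phi_eq_cnt, f1, f2]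
  push_cast
  exact pow_sub_pow_le (by positivity) (by exact_mod_cast hyx) (by positivity) d

/-- The pointwise (after swap-symmetrization) inequality, all cases. -/
private lemma core {M : Finset (Sym2 (Fin n))} {v u : Fin n}
    (hMnd : ∀ e ∈ M, ¬ e.IsDiag) (huv : u ≠ v) (T : Finset (Fin n)) (d : ℕ) :
    Phi M T ^ d + Phi M (T.image (Equiv.swap u v)) ^ d
      ≤ Phi (donate M v u) T ^ d + Phi (donate M v u) (T.image (Equiv.swap u v)) ^ d := by
  by_cases hu : u ∈ T <;> by_cases hv : v ∈ T
  · rw [image_swap_eq_self (iff_of_true hu hv), Phi_eq_cnt (donate M v u),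
      cnt_donate_same M (iff_of_true hu hv), ← Phi_eq_cnt]
  · exact core_main hMnd huv hu hv d
  · -- symmetric case: apply the main case to the swapped set
    have h1 : u ∈ T.image (Equiv.swap u v) := by
      rw [mem_image_swap, Equiv.swap_apply_left]; exact hv
    have h2 : v ∉ T.image (Equiv.swap u v) := by
      rw [mem_image_swap, Equiv.swap_apply_right]; exact hu
    have := core_main hMnd huv h1 h2 d
    rw [image_swap_image_swap T] at this
    linarith
  · rw [image_swap_eq_self (iff_of_false hu hv), Phi_eq_cnt (donate M v u),
      cnt_donate_same M (iff_of_false hu hv), ← Phi_eq_cnt]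

private lemma sum_reindex_swap (u v : Fin n) (k : ℕ) (F : Finset (Fin n) → ℝ) :
    ∑ S ∈ Finset.powersetCard k (Finset.univ : Finset (Fin n)),
        F (S.image (Equiv.swap u v))
      = ∑ S ∈ Finset.powersetCard k (Finset.univ : Finset (Fin n)), F S := by
  apply Finset.sum_nbij' (fun S => S.image (Equiv.swap u v))
    (fun S => S.image (Equiv.swap u v))
  · intro S hS
    rw [Finset.mem_powersetCard_univ] at hS ⊢
    rw [Finset.card_image_of_injective _ (Equiv.injective _), hS]
  · intro S hS
    rw [Finset.mem_powersetCard_univ] at hS ⊢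
    rw [Finset.card_image_of_injective _ (Equiv.injective _), hS]
  · intro S _; exact image_swap_image_swap S
  · intro S _; exact image_swap_image_swap S
  · intro S _; rfl

private lemma double_sum_swap (u v : Fin n) (k : ℕ) (G : Finset (Fin n) → ℝ) :
    ∑ S ∈ Finset.powersetCard k (Finset.univ : Finset (Fin n)),
      ∑ S' ∈ Finset.powersetCard k (Finset.univ : Finset (Fin n)),
        G ((S ∩ S').image (Equiv.swap u v))
    = ∑ S ∈ Finset.powersetCard k (Finset.univ : Finset (Fin n)),
      ∑ S' ∈ Finset.powersetCard k (Finset.univ : Finset (Fin n)), G (S ∩ S') := by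
  have himg : ∀ S S' : Finset (Fin n),
      (S ∩ S').image (Equiv.swap u v)
        = (S.image (Equiv.swap u v)) ∩ (S'.image (Equiv.swap u v)) :=
    fun S S' => Finset.image_inter S S' (Equiv.injective _)
  calc ∑ S ∈ Finset.powersetCard k Finset.univ, ∑ S' ∈ Finset.powersetCard k Finset.univ,
        G ((S ∩ S').image (Equiv.swap u v))
      = ∑ S ∈ Finset.powersetCard k Finset.univ, ∑ S' ∈ Finset.powersetCard k Finset.univ,
        G ((S.image (Equiv.swap u v)) ∩ S') := by
        apply Finset.sum_congr rfl
        intro S _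
        rw [show (fun S' => G ((S ∩ S').image (Equiv.swap u v)))
            = fun S' => G ((S.image (Equiv.swap u v)) ∩ (S'.image (Equiv.swap u v)))
          from funext fun S' => by rw [himg]]
        exact sum_reindex_swap u v k (fun W => G ((S.image (Equiv.swap u v)) ∩ W))
    _ = ∑ S ∈ Finset.powersetCard k Finset.univ, ∑ S' ∈ Finset.powersetCard k Finset.univ,
        G (S ∩ S') :=
        sum_reindex_swap u v k (fun W => ∑ S' ∈ Finset.powersetCard k Finset.univ, G (W ∩ S'))

private lemma double_sum_le {M : Finset (Sym2 (Fin n))} {v u : Fin n}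
    (hMnd : ∀ e ∈ M, ¬ e.IsDiag) (huv : u ≠ v) (k d : ℕ) :
    ∑ S ∈ Finset.powersetCard k (Finset.univ : Finset (Fin n)),
      ∑ S' ∈ Finset.powersetCard k (Finset.univ : Finset (Fin n)), Phi M (S ∩ S') ^ d
    ≤ ∑ S ∈ Finset.powersetCard k (Finset.univ : Finset (Fin n)),
      ∑ S' ∈ Finset.powersetCard k (Finset.univ : Finset (Fin n)),
        Phi (donate M v u) (S ∩ S') ^ d := by
  have key : ∑ S ∈ Finset.powersetCard k (Finset.univ : Finset (Fin n)),
      ∑ S' ∈ Finset.powersetCard k (Finset.univ : Finset (Fin n)),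
        (Phi M (S ∩ S') ^ d + Phi M ((S ∩ S').image (Equiv.swap u v)) ^ d)
      ≤ ∑ S ∈ Finset.powersetCard k (Finset.univ : Finset (Fin n)),
      ∑ S' ∈ Finset.powersetCard k (Finset.univ : Finset (Fin n)),
        (Phi (donate M v u) (S ∩ S') ^ d
          + Phi (donate M v u) ((S ∩ S').image (Equiv.swap u v)) ^ d) := by
    apply Finset.sum_le_sum
    intro S _
    apply Finset.sum_le_sum
    intro S' _
    exact core hMnd huv (S ∩ S') d
  have e1 := double_sum_swap u v k (fun W => Phi M W ^ d)
  have e2 := double_sum_swap u v k (fun W => Phi (donate M v u) W ^ d)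
  simp only [Finset.sum_add_distrib] at key
  linarith

private lemma ldub_donate {M : Finset (Sym2 (Fin n))} {v u : Fin n}
    (hMnd : ∀ e ∈ M, ¬ e.IsDiag) (huv : u ≠ v) (k D : ℕ) :
    LDUB n k D M ≤ LDUB n k D (donate M v u) := by
  unfold LDUB
  apply add_le_add le_rfl
  apply Finset.sum_le_sum
  intro d _
  apply mul_le_mul_of_nonneg_left _ (by positivity)
  unfold cliqueExp
  rw [← Finset.sum_div, ← Finset.sum_div]
  have hle := double_sum_le (v := v) (u := u) hMnd huv k d
  gcongr

/-! ### Degree and cardinality bookkeeping for `donate` -/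

private lemma maskDeg_union {A B : Finset (Sym2 (Fin n))} (h : Disjoint A B) (x : Fin n) :
    maskDeg (A ∪ B) x = maskDeg A x + maskDeg B x := by
  unfold maskDeg
  rw [Finset.filter_union, Finset.card_union_of_disjoint (Finset.disjoint_filter_filter h)]

private lemma maskDeg_sdiff_add {X M : Finset (Sym2 (Fin n))} (h : X ⊆ M) (x : Fin n) :
    maskDeg (M \ X) x + maskDeg X x = maskDeg M x := by
  rw [← maskDeg_union sdiff_disjoint x, Finset.sdiff_union_of_subset h]

private lemma maskDeg_image {A : Finset (Fin n)} {w : Fin n} (hA : ∀ s ∈ A, s ≠ w)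
    (x : Fin n) :
    maskDeg (A.image fun s => s(s, w)) x
      = if x = w then A.card else (A.filter (· = x)).card := by
  unfold maskDeg
  rw [Finset.filter_image, Finset.card_image_of_injOn]
  · split_ifs with hw
    · subst hw
      rw [Finset.filter_true_of_mem]
      intro s _
      exact Sym2.mem_mk_right s x
    · congr 1
      apply Finset.filter_congr
      intro s hs
      simp only [Sym2.mem_iff]
      constructor
      · rintro (rfl | rfl)
        · rfl
        · exact absurd rfl hw
      · intro h; exact Or.inl h.symm
  · intro s hs s' hs' hss
    simp only [Finset.coe_filter, Set.mem_setOf_eq] at hs hs'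
    rcases Sym2.eq_iff.1 hss with ⟨h1, _⟩ | ⟨h1, _⟩
    · exact h1
    · exact absurd h1 (hA s hs.1)

private lemma donate_decomp (M : Finset (Sym2 (Fin n))) (v u : Fin n) :
    Disjoint (M \ (donorSet M v u).image fun s => s(s, v))
      ((donorSet M v u).image fun s => s(s, u)) := by
  rw [Finset.disjoint_left]
  intro e he hY
  rw [Finset.mem_sdiff] at he
  obtain ⟨s, hs, rfl⟩ := Finset.mem_image.1 hY
  exact (mem_donorSet_iff.1 hs).2.2.2 he.1

private lemma donorSet_card_eq_X {M : Finset (Sym2 (Fin n))} {v u : Fin n} :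
    ((donorSet M v u).image fun s => s(s, v)).card = (donorSet M v u).card := by
  apply Finset.card_image_of_injOn
  intro s hs s' hs' hss
  rcases Sym2.eq_iff.1 hss with ⟨h1, _⟩ | ⟨h1, _⟩
  · exact h1
  · exact absurd h1 (donorSet_ne_v s hs)

private lemma donorSet_card_eq_Y {M : Finset (Sym2 (Fin n))} {v u : Fin n} :
    ((donorSet M v u).image fun s => s(s, u)).card = (donorSet M v u).card := by
  apply Finset.card_image_of_injOn
  intro s hs s' hs' hss
  rcases Sym2.eq_iff.1 hss with ⟨h1, _⟩ | ⟨h1, _⟩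
  · exact h1
  · exact absurd h1 (donorSet_ne_u s hs)

private lemma donate_card {M : Finset (Sym2 (Fin n))} (v u : Fin n) :
    (donate M v u).card = M.card := by
  unfold donate
  rw [Finset.card_union_of_disjoint (donate_decomp M v u),
    Finset.card_sdiff_of_subset X_subset_M, donorSet_card_eq_X, donorSet_card_eq_Y]
  have := Finset.card_le_card (X_subset_M (M := M) (v := v) (u := u))
  rw [donorSet_card_eq_X] at this
  omega

private lemma donate_nondiag {M : Finset (Sym2 (Fin n))} {v u : Fin n}
    (hMnd : ∀ e ∈ M, ¬ e.IsDiag) : ∀ e ∈ donate M v u, ¬ e.IsDiag := by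
  intro e he
  rcases Finset.mem_union.1 he with h | h
  · exact hMnd e (Finset.mem_sdiff.1 h).1
  · obtain ⟨s, hs, rfl⟩ := Finset.mem_image.1 h
    rw [Sym2.mk_isDiag_iff]
    exact donorSet_ne_u s hs

private lemma donate_maskDeg_u {M : Finset (Sym2 (Fin n))} {v u : Fin n} (huv : u ≠ v) :
    maskDeg (donate M v u) u = maskDeg M u + (donorSet M v u).card := by
  unfold donate
  rw [maskDeg_union (donate_decomp M v u), maskDeg_image donorSet_ne_u, if_pos rfl]
  have h1 := maskDeg_sdiff_add (X_subset_M (M := M) (v := v) (u := u)) u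
  rw [maskDeg_image donorSet_ne_v, if_neg huv] at h1
  have h2 : ((donorSet M v u).filter (· = u)).card = 0 := by
    rw [Finset.card_eq_zero]
    apply Finset.filter_false_of_mem
    intro s hs
    exact donorSet_ne_u s hs
  omega

private lemma donate_maskDeg_v {M : Finset (Sym2 (Fin n))} {v u : Fin n} (huv : u ≠ v) :
    maskDeg (donate M v u) v + (donorSet M v u).card = maskDeg M v := by
  unfold donate
  rw [maskDeg_union (donate_decomp M v u), maskDeg_image donorSet_ne_u,
    if_neg (Ne.symm huv)]
  have h1 := maskDeg_sdiff_add (X_subset_M (M := M) (v := v) (u := u)) v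
  rw [maskDeg_image donorSet_ne_v, if_pos rfl] at h1
  have h2 : ((donorSet M v u).filter (· = v)).card = 0 := by
    rw [Finset.card_eq_zero]
    apply Finset.filter_false_of_mem
    intro s hs
    exact donorSet_ne_v s hs
  omega

private lemma donate_maskDeg_other {M : Finset (Sym2 (Fin n))} {v u x : Fin n}
    (hxu : x ≠ u) (hxv : x ≠ v) :
    maskDeg (donate M v u) x = maskDeg M x := by
  unfold donate
  rw [maskDeg_union (donate_decomp M v u), maskDeg_image donorSet_ne_u, if_neg hxu]
  have h1 := maskDeg_sdiff_add (X_subset_M (M := M) (v := v) (u := u)) x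
  rw [maskDeg_image donorSet_ne_v, if_neg hxv] at h1
  omega

private lemma donorSet_card_le_deg {M : Finset (Sym2 (Fin n))} {v u : Fin n} :
    (donorSet M v u).card ≤ maskDeg M v := by
  unfold maskDeg
  apply Finset.card_le_card_of_injOn (fun s => s(s, v))
  · intro s hs
    rw [Finset.mem_coe, Finset.mem_filter]
    exact ⟨(mem_donorSet_iff.1 hs).2.2.1, Sym2.mem_mk_right s v⟩
  · intro s hs s' hs' hss
    rcases Sym2.eq_iff.1 hss with ⟨h1, _⟩ | ⟨h1, _⟩
    · exact h1
    · exact absurd h1 (donorSet_ne_v s (by exact_mod_cast hs))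

/-! ### Vertex counting -/

private lemma mem_maskVerts_iff {M : Finset (Sym2 (Fin n))} {x : Fin n} :
    x ∈ maskVerts M ↔ 0 < maskDeg M x := by
  unfold maskVerts maskDeg
  rw [Finset.mem_filter, Finset.card_pos, Finset.filter_nonempty_iff]
  simp

private lemma sum_maskDeg {M : Finset (Sym2 (Fin n))} (hMnd : ∀ e ∈ M, ¬ e.IsDiag) :
    ∑ w : Fin n, maskDeg M w = 2 * M.card := by
  unfold maskDeg
  simp_rw [Finset.card_filter]
  rw [Finset.sum_comm]
  have h2 : ∀ e ∈ M, (∑ w : Fin n, if w ∈ e then 1 else 0) = 2 := by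
    intro e he
    induction e using Sym2.ind with
    | _ a b =>
      have hab : a ≠ b := by
        have := hMnd _ he; rwa [Sym2.mk_isDiag_iff] at this
      rw [← Finset.card_filter]
      have : (Finset.univ.filter (· ∈ s(a, b))) = {a, b} := by
        ext w
        simp [Sym2.mem_iff]
      rw [this, Finset.card_insert_of_notMem (by simpa using hab), Finset.card_singleton]
  rw [Finset.sum_congr rfl h2, Finset.sum_const, smul_eq_mul, mul_comm]

private lemma high_card_le {M : Finset (Sym2 (Fin n))} (hMnd : ∀ e ∈ M, ¬ e.IsDiag)
    (t : ℕ) :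
    (Finset.univ.filter fun w => t + 1 ≤ maskDeg M w).card * (t + 1) ≤ 2 * M.card := by
  calc (Finset.univ.filter fun w => t + 1 ≤ maskDeg M w).card * (t + 1)
      ≤ ∑ w ∈ Finset.univ.filter fun w => t + 1 ≤ maskDeg M w, maskDeg M w := by
        rw [← smul_eq_mul]
        exact Finset.card_nsmul_le_sum _ _ _ (fun x hx => (Finset.mem_filter.1 hx).2)
    _ ≤ ∑ w : Fin n, maskDeg M w :=
        Finset.sum_le_sum_of_subset (Finset.filter_subset _ _)
    _ = 2 * M.card := sum_maskDeg hMnd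

/-- At a stuck state, there are at most `2t+1` low-degree vertices. -/
private lemma stuck_low_card {M : Finset (Sym2 (Fin n))} {t : ℕ}
    (hMnd : ∀ e ∈ M, ¬ e.IsDiag) (hdeg : ∀ w, maskDeg M w ≤ 2 * t)
    (hstuck : ∀ u v : Fin n, u ≠ v → maskDeg M u ≤ t → maskDeg M v ≤ t →
      maskDeg M v ≤ maskDeg M u → donorSet M v u = ∅) :
    (Finset.univ.filter fun w => 0 < maskDeg M w ∧ maskDeg M w ≤ t).card ≤ 2 * t + 1 := by
  set L := Finset.univ.filter fun w => 0 < maskDeg M w ∧ maskDeg M w ≤ t with hL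
  by_cases hne : L.Nonempty
  · obtain ⟨v, hvL, hvmin⟩ := Finset.exists_min_image L (maskDeg M) hne
    obtain ⟨hvpos, hvt⟩ := (Finset.mem_filter.1 hvL).2
    -- get an edge at v
    obtain ⟨e, he⟩ := Finset.card_pos.1 hvpos
    rw [Finset.mem_filter] at he
    obtain ⟨s₀, rfl⟩ := Sym2.mem_iff_exists.1 he.2
    have hs₀M : s(s₀, v) ∈ M := by rw [Sym2.eq_swap]; exact he.1
    have hs₀v : s₀ ≠ v := by
      intro h
      have := hMnd _ he.1
      rw [Sym2.mk_isDiag_iff] at this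
      exact this h.symm
    -- every low vertex other than v is s₀ or a neighbour of s₀
    have hkey : ∀ u ∈ L.erase v, u = s₀ ∨ s(s₀, u) ∈ M := by
      intro u hu
      obtain ⟨huv, huL⟩ := Finset.mem_erase.1 hu
      obtain ⟨hupos, hut⟩ := (Finset.mem_filter.1 huL).2
      have hdse := hstuck u v huv hut hvt (hvmin u huL)
      by_cases hs₀u : s₀ = u
      · exact Or.inl hs₀u.symm
      by_cases hmem : s(s₀, u) ∈ M
      · exact Or.inr hmem
      · exfalso
        have : s₀ ∈ donorSet M v u := mem_donorSet_iff.2 ⟨hs₀v, hs₀u, hs₀M, hmem⟩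
        rw [hdse] at this
        exact absurd this (Finset.notMem_empty s₀)
    -- inject L.erase v into the edges at s₀
    have hinj : (L.erase v).card ≤ maskDeg M s₀ := by
      unfold maskDeg
      apply Finset.card_le_card_of_injOn
        (fun u => if u = s₀ then s(s₀, v) else s(s₀, u))
      · intro u hu
        rcases hkey u hu with h | h
        · simp only [Finset.mem_coe]; rw [if_pos h, Finset.mem_filter]
          exact ⟨hs₀M, Sym2.mem_mk_left s₀ v⟩
        · by_cases hus : u = s₀
          · simp only [Finset.mem_coe]; rw [if_pos hus, Finset.mem_filter]
            exact ⟨hs₀M, Sym2.mem_mk_left s₀ v⟩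
          · simp only [Finset.mem_coe]; rw [if_neg hus, Finset.mem_filter]
            exact ⟨h, Sym2.mem_mk_left s₀ u⟩
      · intro a ha b hb hab
        simp only at hab
        have hav : a ≠ v := (Finset.mem_erase.1 (by exact_mod_cast ha)).1
        have hbv : b ≠ v := (Finset.mem_erase.1 (by exact_mod_cast hb)).1
        by_cases has : a = s₀ <;> by_cases hbs : b = s₀
        · rw [has, hbs]
        · rw [if_pos has, if_neg hbs] at hab
          rcases Sym2.eq_iff.1 hab with ⟨_, h2⟩ | ⟨h1, _⟩
          · exact absurd h2.symm hbv
          · exact absurd h1.symm hbs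
        · rw [if_neg has, if_pos hbs] at hab
          rcases Sym2.eq_iff.1 hab with ⟨_, h2⟩ | ⟨_, h2⟩
          · exact absurd h2 hav
          · exact absurd h2 has
        · rw [if_neg has, if_neg hbs] at hab
          rcases Sym2.eq_iff.1 hab with ⟨_, h2⟩ | ⟨_, h2⟩
          · exact h2
          · exact absurd h2 has
    have hcard : (L.erase v).card = L.card - 1 := Finset.card_erase_of_mem hvL
    have hLpos : 0 < L.card := Finset.card_pos.2 ⟨v, hvL⟩
    have := hdeg s₀
    omega
  · rw [Finset.not_nonempty_iff_eq_empty] at hne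
    rw [hne]
    simp

/-- At a stuck state, the vertex-count bound holds. -/
private lemma stuck_bound {M : Finset (Sym2 (Fin n))} {t : ℕ} (ht : 0 < t)
    (hMnd : ∀ e ∈ M, ¬ e.IsDiag) (hdeg : ∀ w, maskDeg M w ≤ 2 * t)
    (hstuck : ∀ u v : Fin n, u ≠ v → maskDeg M u ≤ t → maskDeg M v ≤ t →
      maskDeg M v ≤ maskDeg M u → donorSet M v u = ∅) :
    ((maskVerts M).card : ℝ) ≤ 2 * (t : ℝ) + 2 + 2 * (M.card : ℝ) / (t : ℝ) := by
  set L := Finset.univ.filter fun w => 0 < maskDeg M w ∧ maskDeg M w ≤ t with hLdef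
  set H := Finset.univ.filter fun w => t + 1 ≤ maskDeg M w with hHdef
  have hsub : maskVerts M ⊆ L ∪ H := by
    intro w hw
    have hwpos := mem_maskVerts_iff.1 hw
    rw [Finset.mem_union, hLdef, hHdef, Finset.mem_filter, Finset.mem_filter]
    by_cases h : maskDeg M w ≤ t
    · exact Or.inl ⟨Finset.mem_univ w, hwpos, h⟩
    · exact Or.inr ⟨Finset.mem_univ w, by omega⟩
  have h1 : (maskVerts M).card ≤ L.card + H.card :=
    le_trans (Finset.card_le_card hsub) (Finset.card_union_le L H)
  have h2 : L.card ≤ 2 * t + 1 := stuck_low_card hMnd hdeg hstuck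
  have h3 : H.card * (t + 1) ≤ 2 * M.card := high_card_le hMnd t
  have h4 : H.card * t ≤ 2 * M.card := by nlinarith [Nat.zero_le (H.card)]
  have h5 : ((H.card : ℝ)) ≤ 2 * (M.card : ℝ) / (t : ℝ) := by
    rw [le_div_iff₀ (by exact_mod_cast ht)]
    exact_mod_cast h4
  have h6 : ((maskVerts M).card : ℝ) ≤ (L.card : ℝ) + (H.card : ℝ) := by exact_mod_cast h1
  have h7 : (L.card : ℝ) ≤ 2 * (t : ℝ) + 1 := by exact_mod_cast h2
  linarith

/-- The improvement step: a valid donation strictly increases `∑ deg²` and keeps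
all the invariants. -/
private lemma step_facts {M : Finset (Sym2 (Fin n))} {t : ℕ} {u v : Fin n}
    (huv : u ≠ v) (hut : maskDeg M u ≤ t) (hvt : maskDeg M v ≤ t)
    (hvu : maskDeg M v ≤ maskDeg M u) (hne : (donorSet M v u).Nonempty)
    (hdeg : ∀ w, maskDeg M w ≤ 2 * t) :
    (∀ w, maskDeg (donate M v u) w ≤ 2 * t) ∧
    (∑ w : Fin n, (maskDeg M w) ^ 2) + 1 ≤ ∑ w : Fin n, (maskDeg (donate M v u) w) ^ 2 := by
  have hDpos : 0 < (donorSet M v u).card := Finset.card_pos.2 hne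
  have hDle : (donorSet M v u).card ≤ maskDeg M v := donorSet_card_le_deg
  have hu' := donate_maskDeg_u (M := M) huv
  have hv' := donate_maskDeg_v (M := M) huv
  constructor
  · intro w
    by_cases hwu : w = u
    · rw [hwu]; omega
    by_cases hwv : w = v
    · rw [hwv]; omega
    · rw [donate_maskDeg_other hwu hwv]; exact hdeg w
  · have hsplit : ∀ N : Finset (Sym2 (Fin n)),
        ∑ w : Fin n, (maskDeg N w) ^ 2
          = ∑ w ∈ Finset.univ \ {u, v}, (maskDeg N w) ^ 2
            + ((maskDeg N u) ^ 2 + (maskDeg N v) ^ 2) := by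
      intro N
      rw [← Finset.sum_sdiff (Finset.subset_univ {u, v}), Finset.sum_pair huv]
    rw [hsplit M, hsplit (donate M v u)]
    have heq : ∑ w ∈ Finset.univ \ {u, v}, (maskDeg (donate M v u) w) ^ 2
        = ∑ w ∈ Finset.univ \ {u, v}, (maskDeg M w) ^ 2 := by
      apply Finset.sum_congr rfl
      intro w hw
      rw [Finset.mem_sdiff, Finset.mem_insert, Finset.mem_singleton] at hw
      push_neg at hw
      rw [donate_maskDeg_other hw.2.1 hw.2.2]
    rw [heq]
    have hexp : maskDeg (donate M v u) u = maskDeg M u + (donorSet M v u).card := hu'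
    set a := maskDeg M u
    set b := maskDeg M v
    set b' := maskDeg (donate M v u) v
    set Dc := (donorSet M v u).card
    have hb : b = b' + Dc := by omega
    have hab : b' + Dc ≤ a := by omega
    rw [hexp, hb]
    have : a ^ 2 + (b' + Dc) ^ 2 + 1 ≤ (a + Dc) ^ 2 + b' ^ 2 := by nlinarith
    omega

/-- Main induction: repeated donation reaches a mask with few vertices. -/
private lemma aux_induction (k D t : ℕ) (ht : 0 < t) :
    ∀ fuel : ℕ, ∀ M : Finset (Sym2 (Fin n)),
      (∀ e ∈ M, ¬ e.IsDiag) → (∀ w, maskDeg M w ≤ 2 * t) →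
      n * (2 * t) ^ 2 ≤ (∑ w : Fin n, (maskDeg M w) ^ 2) + fuel →
      ∃ M' : Finset (Sym2 (Fin n)),
        LDUB n k D M ≤ LDUB n k D M' ∧
        ((maskVerts M').card : ℝ) ≤ 2 * (t : ℝ) + 2 + 2 * (M.card : ℝ) / (t : ℝ) := by
  intro fuel
  induction fuel with
  | zero =>
    intro M hMnd hdeg hfuel
    by_cases hstep : ∃ u v : Fin n, u ≠ v ∧ maskDeg M u ≤ t ∧ maskDeg M v ≤ t ∧
        maskDeg M v ≤ maskDeg M u ∧ (donorSet M v u).Nonempty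
    · exfalso
      obtain ⟨u, v, huv, hut, hvt, hvu, hne⟩ := hstep
      obtain ⟨hdeg', hsq⟩ := step_facts huv hut hvt hvu hne hdeg
      have hub : ∑ w : Fin n, (maskDeg (donate M v u) w) ^ 2 ≤ n * (2 * t) ^ 2 := by
        calc ∑ w : Fin n, (maskDeg (donate M v u) w) ^ 2
            ≤ ∑ _w : Fin n, (2 * t) ^ 2 := by
              apply Finset.sum_le_sum
              intro w _
              exact Nat.pow_le_pow_left (hdeg' w) 2
          _ = n * (2 * t) ^ 2 := by
              rw [Finset.sum_const, smul_eq_mul, Finset.card_univ, Fintype.card_fin]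
      omega
    · push_neg at hstep
      refine ⟨M, le_refl _, stuck_bound ht hMnd hdeg ?_⟩
      intro u v huv hut hvt hvu
      rw [← Finset.not_nonempty_iff_eq_empty]
      simpa using hstep u v huv hut hvt hvu
  | succ f ih =>
    intro M hMnd hdeg hfuel
    by_cases hstep : ∃ u v : Fin n, u ≠ v ∧ maskDeg M u ≤ t ∧ maskDeg M v ≤ t ∧
        maskDeg M v ≤ maskDeg M u ∧ (donorSet M v u).Nonempty
    · obtain ⟨u, v, huv, hut, hvt, hvu, hne⟩ := hstep
      obtain ⟨hdeg', hsq⟩ := step_facts huv hut hvt hvu hne hdeg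
      obtain ⟨M', hle, hcard⟩ := ih (donate M v u) (donate_nondiag hMnd) hdeg' (by omega)
      refine ⟨M', le_trans (ldub_donate hMnd huv k D) hle, ?_⟩
      rwa [donate_card] at hcard
    · push_neg at hstep
      refine ⟨M, le_refl _, stuck_bound ht hMnd hdeg ?_⟩
      intro u v huv hut hvt hvu
      rw [← Finset.not_nonempty_iff_eq_empty]
      simpa using hstep u v huv hut hvt hvu

end Aux
/-- Any mask `M` with maximum mask degree at most `2t` has
its `LDUB` dominated by that of a mask `M'` with few vertices:
`|V(M')| ≤ 2t + 2 + 2|M|/t`. -/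
theorem remove_most_vertices {n : ℕ} (k D t : ℕ) (hn : 0 < n) (hk : 0 < k)
    (hkn : k ≤ n) (hD : 0 < D) (ht : 0 < t)
    (M : Finset (Sym2 (Fin n))) (hMnd : ∀ e ∈ M, ¬ e.IsDiag)
    (hdeg : ∀ v ∈ maskVerts M, maskDeg M v ≤ 2 * t) :
    ∃ M' : Finset (Sym2 (Fin n)),
      LDUB n k D M ≤ LDUB n k D M' ∧
      ((maskVerts M').card : ℝ) ≤ 2 * (t : ℝ) + 2 + 2 * (M.card : ℝ) / (t : ℝ) := by
  have hdeg' : ∀ w, maskDeg M w ≤ 2 * t := by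
    intro w
    by_cases hw : w ∈ maskVerts M
    · exact hdeg w hw
    · have : ¬ 0 < maskDeg M w := fun h => hw (mem_maskVerts_iff.2 h)
      omega
  exact aux_induction k D t ht (n * (2 * t) ^ 2) M hMnd hdeg' (by omega)

end PlantedCliqueLD
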